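/- arXiv:0805.1252 — 2 statements merged into one kernel-verified Lean document; each statement's English description precedes it below -/
import Mathlib

section
/- Let Φ_F = {±e_i : 1 ≤ i ≤ 4} ∪ {±e_i ± e_j : 1 ≤ i < j ≤ 4} ∪ {(±1/2, ±1/2, ±1/2, ±1/2)} be the set of roots of type F_4 in ℝ^4, and let M = {a ∈ ℤ^4 : a_1 + a_2 + a_3 + a_4 is even}. For every odd integer q ≥ 1, the number of points u ∈ M satisfying |⟨u, v⟩| ≤ q for all v ∈ Φ_F equals q^4 + 2q^3 + 2q^2 − 2q − 2. In particular, for every integer q ≥ 2, the number of points of M in the interior of the dilate q·F (equivalently, satisfying |⟨u, v⟩| ≤ q − 1 for all v ∈ Φ_F) is strictly less than q^4. -/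
open Finset

/-- The `i`-th standard basis vector of `ℝ^n`. -/
noncomputable def stdBasis (n : ℕ) (i : Fin n) : Fin n → ℝ := fun j => if j = i then 1 else 0

/-- The standard inner product on `ℝ^n`. -/
noncomputable def innerProd {n : ℕ} (u v : Fin n → ℝ) : ℝ := ∑ i, u i * v i

/-- The roots of type `F_4`: `±e_i`, `±e_i ± e_j` for `i < j`, and `(±1/2, ±1/2, ±1/2, ±1/2)`. -/
noncomputable def typeF : Set (Fin 4 → ℝ) :=
  {v | ∃ i, v = stdBasis 4 i ∨ v = -stdBasis 4 i} ∪
  {v | ∃ i j, i < j ∧ ∃ ε δ : ℝ, (ε = 1 ∨ ε = -1) ∧ (δ = 1 ∨ δ = -1) ∧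
    v = ε • stdBasis 4 i + δ • stdBasis 4 j} ∪
  {v | ∀ i, v i = 1/2 ∨ v i = -1/2}

/-- The dual lattice of the `F_4` root lattice: integer vectors with even coordinate sum. -/
def evenLattice : Set (Fin 4 → ℝ) :=
  {a | (∀ i, ∃ m : ℤ, a i = m) ∧ ∃ m : ℤ, ∑ i, a i = 2 * m}


noncomputable def boxZ (n : ℤ) : Finset ℤ := Finset.Icc (-n) n

lemma boxZ_card (n : ℤ) (hn : 0 ≤ n) : ((boxZ n).card : ℤ) = 2*n+1 := by
  rw [boxZ, Int.card_Icc]; omega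

lemma parity_count (K : ℤ) (hK : 0 ≤ K) (p : ℤ → Prop) [DecidablePred p] (e : ℤ)
    (hp : ∀ x, p x ↔ 2 ∣ x + e) :
    (∑ x ∈ boxZ K, if p x then (1:ℤ) else 0) = K + (if 2 ∣ K + e then 1 else 0) := by
  rw [Finset.sum_boole]
  have hfe : (boxZ K).filter p = (boxZ K).filter (fun x => 2 ∣ x + e) :=
    Finset.filter_congr (fun x _ => by simp [hp x])
  rw [hfe]
  by_cases hpar : 2 ∣ K + e
  · have : ((boxZ K).filter (fun x => 2 ∣ x + e)).card = (Finset.Icc (0:ℤ) K).card := by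
      apply Finset.card_bij' (fun x _ => (x + K) / 2) (fun t _ => 2 * t - K)
      · intro a ha; simp only [boxZ, Finset.mem_filter, Finset.mem_Icc] at *; omega
      · intro a ha; simp only [boxZ, Finset.mem_filter, Finset.mem_Icc] at *; omega
      · intro a ha; simp only [boxZ, Finset.mem_filter, Finset.mem_Icc] at *; omega
      · intro a ha; simp only [boxZ, Finset.mem_filter, Finset.mem_Icc] at *; omega
    rw [this, Int.card_Icc]; simp [hpar]; omega
  · have : ((boxZ K).filter (fun x => 2 ∣ x + e)).card = (Finset.Icc (0:ℤ) (K-1)).card := by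
      apply Finset.card_bij' (fun x _ => (x + K - 1) / 2) (fun t _ => 2 * t - K + 1)
      · intro a ha; simp only [boxZ, Finset.mem_filter, Finset.mem_Icc] at *; omega
      · intro a ha; simp only [boxZ, Finset.mem_filter, Finset.mem_Icc] at *; omega
      · intro a ha; simp only [boxZ, Finset.mem_filter, Finset.mem_Icc] at *; omega
      · intro a ha; simp only [boxZ, Finset.mem_filter, Finset.mem_Icc] at *; omega
    rw [this, Int.card_Icc]; simp [hpar]; omega

lemma const_sum (K : ℤ) (hK : 0 ≤ K) (c : ℤ) : (∑ _x ∈ boxZ K, c) = (2*K+1) * c := by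
  rw [Finset.sum_const, nsmul_eq_mul]
  have := boxZ_card K hK
  rw [this]

lemma cube_count (K e : ℤ) (hK : 0 ≤ K) :
    (∑ x ∈ boxZ K ×ˢ boxZ K ×ˢ boxZ K, if 2 ∣ e + x.1 + x.2.1 + x.2.2 then (1:ℤ) else 0)
      = K*(2*K+1)^2 + K*(2*K+1) + K + (if 2 ∣ K + e then 1 else 0) := by
  simp only [Finset.sum_product]
  have step1 : ∀ a b : ℤ, (∑ c ∈ boxZ K, if 2 ∣ e + a + b + c then (1:ℤ) else 0)
      = K + (if 2 ∣ K + (e + a + b) then 1 else 0) := by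
    intro a b
    exact parity_count K hK _ (e + a + b) (fun x => by omega)
  simp only [step1]
  have step2 : ∀ a : ℤ, (∑ b ∈ boxZ K, if 2 ∣ K + (e + a + b) then (1:ℤ) else 0)
      = K + (if 2 ∣ 2*K + (e + a) then 1 else 0) := by
    intro a
    have h1 := parity_count K hK (fun b => 2 ∣ K + (e + a + b)) (K + e + a) (fun x => by omega)
    rw [h1]; simp only [show (2 ∣ K + (K + e + a)) ↔ (2 ∣ 2*K + (e + a)) from by omega]
  simp only [Finset.sum_add_distrib, const_sum K hK, step2]
  have step3 : (∑ a ∈ boxZ K, if 2 ∣ 2*K + (e + a) then (1:ℤ) else 0)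
      = K + (if 2 ∣ 3*K + e then 1 else 0) := by
    have h1 := parity_count K hK (fun a => 2 ∣ 2*K + (e + a)) (2*K + e) (fun x => by omega)
    rw [h1]; simp only [show (2 ∣ K + (2*K + e)) ↔ (2 ∣ 3*K + e) from by omega]
  rw [step3]; simp only [show (2 ∣ 3*K + e) ↔ (2 ∣ K + e) from by omega]
  ring

lemma quad_count (h : ℤ) (hh : 0 ≤ h) :
    (∑ x ∈ boxZ h ×ˢ boxZ h ×ˢ boxZ h ×ˢ boxZ h,
        if 2 ∣ x.1 + x.2.1 + x.2.2.1 + x.2.2.2 then (1:ℤ) else 0)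
      = h*(2*h+1)^3 + h*(2*h+1)^2 + h*(2*h+1) + h + 1 := by
  rw [Finset.sum_product]
  have step : ∀ a : ℤ, (∑ y ∈ boxZ h ×ˢ boxZ h ×ˢ boxZ h,
      if 2 ∣ a + y.1 + y.2.1 + y.2.2 then (1:ℤ) else 0)
      = (h*(2*h+1)^2 + h*(2*h+1) + h) + (if 2 ∣ h + a then 1 else 0) := by
    intro a; rw [cube_count h a hh]
  simp only [step]
  rw [Finset.sum_add_distrib, const_sum h hh]
  have h2 : (∑ a ∈ boxZ h, if 2 ∣ h + a then (1:ℤ) else 0) = h + 1 := by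
    have h1 := parity_count h hh (fun a => 2 ∣ h + a) h (fun x => by omega)
    rw [h1, if_pos (show 2 ∣ h + h from by omega)]
  rw [h2]; ring

noncomputable def P3 (n : ℤ) : Finset (ℤ×ℤ×ℤ) := boxZ n ×ˢ boxZ n ×ˢ boxZ n
noncomputable def P4 (n : ℤ) : Finset (ℤ×ℤ×ℤ×ℤ) := boxZ n ×ˢ boxZ n ×ˢ boxZ n ×ˢ boxZ n

def condT (n : ℤ) (x : ℤ×ℤ×ℤ×ℤ) : Prop :=
  2 ∣ (x.1 + x.2.1 + x.2.2.1 + x.2.2.2) ∧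
  |x.1| + |x.2.1| ≤ n ∧ |x.1| + |x.2.2.1| ≤ n ∧ |x.1| + |x.2.2.2| ≤ n ∧
  |x.2.1| + |x.2.2.1| ≤ n ∧ |x.2.1| + |x.2.2.2| ≤ n ∧ |x.2.2.1| + |x.2.2.2| ≤ n

instance condT_dec (n : ℤ) (x : ℤ×ℤ×ℤ×ℤ) : Decidable (condT n x) := by
  unfold condT; infer_instance

noncomputable def Tfin (n : ℤ) : Finset (ℤ×ℤ×ℤ×ℤ) := (P4 n).filter (condT n)

lemma card_filter_product {α β : Type*} (s : Finset α) (t : Finset β)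
    (p : α × β → Prop) [DecidablePred p] :
    ((s ×ˢ t).filter p).card = ∑ a ∈ s, ((t.filter fun b => p (a,b)).card) := by
  simp only [Finset.card_filter, Finset.sum_product]

lemma sum_poly (m : ℕ) :
    2 * (∑ k ∈ Finset.range m, ((k:ℤ)*(2*k+1)^2 + k*(2*k+1) + k))
      = 2*(m:ℤ)^4 - (m:ℤ)^2 - m := by
  induction m with
  | zero => simp
  | succ m ih => rw [Finset.sum_range_succ, mul_add, ih]; push_cast; ring

/-- Count of the part of `Tfin n` where the first coordinate is large. -/
lemma cardL (n : ℤ) (hn : 1 ≤ n) :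
    (((P4 n).filter (fun x => condT n x ∧ n/2+1 ≤ |x.1|)).card : ℤ)
      = (2*(n - n/2)^4 - (n - n/2)^2 - (n - n/2))
        + (if 2 ∣ n then 2*(n - n/2) else 0) := by
  set h := n/2 with hh
  have hbounds : 2*h ≤ n ∧ n ≤ 2*h+1 := by omega
  -- step A : split off first coordinate
  have hP4 : P4 n = boxZ n ×ˢ P3 n := rfl
  have hA : (((P4 n).filter (fun x => condT n x ∧ h+1 ≤ |x.1|)).card : ℤ)
      = ∑ a ∈ boxZ n,
          (((P3 n).filter (fun y => condT n (a, y) ∧ h+1 ≤ |a|)).card : ℤ) := by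
    rw [hP4, card_filter_product]
    push_cast
    rfl
  rw [hA]
  -- split the interval
  have hsplit : boxZ n = (Finset.Icc (-n) (-(h+1)) ∪ Finset.Icc (-h) h) ∪ Finset.Icc (h+1) n := by
    ext a
    simp only [boxZ, Finset.mem_Icc, Finset.mem_union]
    omega
  have hd1 : Disjoint (Finset.Icc (-n) (-(h+1)) ∪ Finset.Icc (-h) h) (Finset.Icc (h+1) n) := by
    simp only [Finset.disjoint_left, Finset.mem_union, Finset.mem_Icc]
    omega
  have hd2 : Disjoint (Finset.Icc (-n) (-(h+1))) (Finset.Icc (-h) h) := by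
    simp only [Finset.disjoint_left, Finset.mem_Icc]
    omega
  rw [hsplit, Finset.sum_union hd1, Finset.sum_union hd2]
  -- middle part vanishes
  have hmid : ∑ a ∈ Finset.Icc (-h) h,
      (((P3 n).filter (fun y => condT n (a, y) ∧ h+1 ≤ |a|)).card : ℤ) = 0 := by
    apply Finset.sum_eq_zero
    intro a ha
    simp only [Finset.mem_Icc] at ha
    have : (P3 n).filter (fun y => condT n (a, y) ∧ h+1 ≤ |a|) = ∅ := by
      apply Finset.filter_eq_empty_iff.mpr
      intro y _
      simp only [Int.abs_eq_natAbs, not_and]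
      intro _
      omega
    rw [this]; simp
  rw [hmid, add_zero]
  -- positive side fibers
  have hposfib : ∀ a ∈ Finset.Icc (h+1) n,
      (((P3 n).filter (fun y => condT n (a, y) ∧ h+1 ≤ |a|)).card : ℤ)
        = ((n-a)*(2*(n-a)+1)^2 + (n-a)*(2*(n-a)+1) + (n-a)) + (if 2 ∣ n then 1 else 0) := by
    intro a ha
    simp only [Finset.mem_Icc] at ha
    have hfe : (P3 n).filter (fun y => condT n (a, y) ∧ h+1 ≤ |a|)
        = (P3 (n-a)).filter (fun y => 2 ∣ a + y.1 + y.2.1 + y.2.2) := by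
      ext ⟨b, c, d⟩
      simp only [P3, boxZ, condT, Finset.mem_filter, Finset.mem_product, Finset.mem_Icc,
        Int.abs_eq_natAbs]
      omega
    rw [hfe]
    have hcast : (((P3 (n-a)).filter (fun y => 2 ∣ a + y.1 + y.2.1 + y.2.2)).card : ℤ)
        = ∑ y ∈ P3 (n-a), (if 2 ∣ a + y.1 + y.2.1 + y.2.2 then (1:ℤ) else 0) := by
      rw [Finset.card_filter]
      push_cast
      rfl
    rw [hcast, P3, cube_count (n-a) a (by omega)]
    simp only [show (2 ∣ (n-a) + a) ↔ (2 ∣ n) from by omega]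
  -- negative side fibers
  have hnegfib : ∀ a ∈ Finset.Icc (-n) (-(h+1)),
      (((P3 n).filter (fun y => condT n (a, y) ∧ h+1 ≤ |a|)).card : ℤ)
        = ((n+a)*(2*(n+a)+1)^2 + (n+a)*(2*(n+a)+1) + (n+a)) + (if 2 ∣ n then 1 else 0) := by
    intro a ha
    simp only [Finset.mem_Icc] at ha
    have hfe : (P3 n).filter (fun y => condT n (a, y) ∧ h+1 ≤ |a|)
        = (P3 (n+a)).filter (fun y => 2 ∣ a + y.1 + y.2.1 + y.2.2) := by
      ext ⟨b, c, d⟩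
      simp only [P3, boxZ, condT, Finset.mem_filter, Finset.mem_product, Finset.mem_Icc,
        Int.abs_eq_natAbs]
      omega
    rw [hfe]
    have hcast : (((P3 (n+a)).filter (fun y => 2 ∣ a + y.1 + y.2.1 + y.2.2)).card : ℤ)
        = ∑ y ∈ P3 (n+a), (if 2 ∣ a + y.1 + y.2.1 + y.2.2 then (1:ℤ) else 0) := by
      rw [Finset.card_filter]
      push_cast
      rfl
    rw [hcast, P3, cube_count (n+a) a (by omega)]
    simp only [show (2 ∣ (n+a) + a) ↔ (2 ∣ n) from by omega]
  rw [Finset.sum_congr rfl hposfib, Finset.sum_congr rfl hnegfib]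
  have key : ∀ (s : Finset ℤ) (f : ℤ → ℤ) (c : ℤ),
      (∑ x ∈ s, (f x + c)) = (∑ x ∈ s, f x) + (s.card : ℤ) * c := by
    intro s f c
    rw [Finset.sum_add_distrib, Finset.sum_const, nsmul_eq_mul]
  rw [key (Finset.Icc (-n) (-(h+1)))
        (fun a => (n+a)*(2*(n+a)+1)^2 + (n+a)*(2*(n+a)+1) + (n+a)) (if 2 ∣ n then 1 else 0),
      key (Finset.Icc (h+1) n)
        (fun a => (n-a)*(2*(n-a)+1)^2 + (n-a)*(2*(n-a)+1) + (n-a)) (if 2 ∣ n then 1 else 0)]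
  have hcard1 : ((Finset.Icc (-n) (-(h+1))).card : ℤ) = n - h := by
    rw [Int.card_Icc]; omega
  have hcard2 : ((Finset.Icc (h+1) n).card : ℤ) = n - h := by
    rw [Int.card_Icc]; omega
  rw [hcard1, hcard2]
  -- reindex both polynomial sums to a range sum
  have hre1 : ∑ a ∈ Finset.Icc (-n) (-(h+1)),
      ((n+a)*(2*(n+a)+1)^2 + (n+a)*(2*(n+a)+1) + (n+a))
      = ∑ k ∈ Finset.range (n - h).toNat, ((k:ℤ)*(2*(k:ℤ)+1)^2 + (k:ℤ)*(2*(k:ℤ)+1) + (k:ℤ)) := by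
    apply Finset.sum_nbij' (fun a => (n + a).toNat) (fun k => (k : ℤ) - n)
    · intro a ha; simp only [Finset.mem_Icc, Finset.mem_range] at *; omega
    · intro k hk; simp only [Finset.mem_Icc, Finset.mem_range] at *; omega
    · intro a ha; simp only [Finset.mem_Icc] at ha; omega
    · intro k hk; simp only [Finset.mem_range] at hk; omega
    · intro a ha
      simp only [Finset.mem_Icc] at ha
      have : ((n + a).toNat : ℤ) = n + a := by omega
      rw [this]
  have hre2 : ∑ a ∈ Finset.Icc (h+1) n,
      ((n-a)*(2*(n-a)+1)^2 + (n-a)*(2*(n-a)+1) + (n-a))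
      = ∑ k ∈ Finset.range (n - h).toNat, ((k:ℤ)*(2*(k:ℤ)+1)^2 + (k:ℤ)*(2*(k:ℤ)+1) + (k:ℤ)) := by
    apply Finset.sum_nbij' (fun a => (n - a).toNat) (fun k => n - (k : ℤ))
    · intro a ha; simp only [Finset.mem_Icc, Finset.mem_range] at *; omega
    · intro k hk; simp only [Finset.mem_Icc, Finset.mem_range] at *; omega
    · intro a ha; simp only [Finset.mem_Icc] at ha; omega
    · intro k hk; simp only [Finset.mem_range] at hk; omega
    · intro a ha
      simp only [Finset.mem_Icc] at ha
      have : ((n - a).toNat : ℤ) = n - a := by omega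
      rw [this]
  rw [hre1, hre2]
  have hJ : ((n - h).toNat : ℤ) = n - h := by omega
  have hsp := sum_poly (n - h).toNat
  rw [hJ] at hsp
  by_cases hp : 2 ∣ n
  · simp only [if_pos hp]
    linarith
  · simp only [if_neg hp]
    linarith

lemma cardL2 (n : ℤ) :
    ((P4 n).filter (fun x => condT n x ∧ n/2+1 ≤ |x.2.1|)).card
      = ((P4 n).filter (fun x => condT n x ∧ n/2+1 ≤ |x.1|)).card := by
  apply Finset.card_nbij' (fun x => (x.2.1, x.1, x.2.2.1, x.2.2.2))
    (fun x => (x.2.1, x.1, x.2.2.1, x.2.2.2))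
  · intro ⟨a,b,c,d⟩ hx
    simp only [P4, boxZ, condT, Finset.mem_coe, Finset.mem_filter, Finset.mem_product, Finset.mem_Icc,
      Int.abs_eq_natAbs] at *
    omega
  · intro ⟨a,b,c,d⟩ hx
    simp only [P4, boxZ, condT, Finset.mem_coe, Finset.mem_filter, Finset.mem_product, Finset.mem_Icc,
      Int.abs_eq_natAbs] at *
    omega
  · intro x _; rfl
  · intro x _; rfl

lemma cardL3 (n : ℤ) :
    ((P4 n).filter (fun x => condT n x ∧ n/2+1 ≤ |x.2.2.1|)).card
      = ((P4 n).filter (fun x => condT n x ∧ n/2+1 ≤ |x.1|)).card := by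
  apply Finset.card_nbij' (fun x => (x.2.2.1, x.2.1, x.1, x.2.2.2))
    (fun x => (x.2.2.1, x.2.1, x.1, x.2.2.2))
  · intro ⟨a,b,c,d⟩ hx
    simp only [P4, boxZ, condT, Finset.mem_coe, Finset.mem_filter, Finset.mem_product, Finset.mem_Icc,
      Int.abs_eq_natAbs] at *
    omega
  · intro ⟨a,b,c,d⟩ hx
    simp only [P4, boxZ, condT, Finset.mem_coe, Finset.mem_filter, Finset.mem_product, Finset.mem_Icc,
      Int.abs_eq_natAbs] at *
    omega
  · intro x _; rfl
  · intro x _; rfl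

lemma cardL4 (n : ℤ) :
    ((P4 n).filter (fun x => condT n x ∧ n/2+1 ≤ |x.2.2.2|)).card
      = ((P4 n).filter (fun x => condT n x ∧ n/2+1 ≤ |x.1|)).card := by
  apply Finset.card_nbij' (fun x => (x.2.2.2, x.2.1, x.2.2.1, x.1))
    (fun x => (x.2.2.2, x.2.1, x.2.2.1, x.1))
  · intro ⟨a,b,c,d⟩ hx
    simp only [P4, boxZ, condT, Finset.mem_coe, Finset.mem_filter, Finset.mem_product, Finset.mem_Icc,
      Int.abs_eq_natAbs] at *
    omega
  · intro ⟨a,b,c,d⟩ hx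
    simp only [P4, boxZ, condT, Finset.mem_coe, Finset.mem_filter, Finset.mem_product, Finset.mem_Icc,
      Int.abs_eq_natAbs] at *
    omega
  · intro x _; rfl
  · intro x _; rfl

lemma cardS (n : ℤ) (hn : 1 ≤ n) :
    (((P4 n).filter (fun x => condT n x ∧
        (|x.1| ≤ n/2 ∧ |x.2.1| ≤ n/2 ∧ |x.2.2.1| ≤ n/2 ∧ |x.2.2.2| ≤ n/2))).card : ℤ)
      = (n/2)*(2*(n/2)+1)^3 + (n/2)*(2*(n/2)+1)^2 + (n/2)*(2*(n/2)+1) + (n/2) + 1 := by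
  have hfe : (P4 n).filter (fun x => condT n x ∧
        (|x.1| ≤ n/2 ∧ |x.2.1| ≤ n/2 ∧ |x.2.2.1| ≤ n/2 ∧ |x.2.2.2| ≤ n/2))
      = (P4 (n/2)).filter (fun x => 2 ∣ x.1 + x.2.1 + x.2.2.1 + x.2.2.2) := by
    ext ⟨a,b,c,d⟩
    simp only [P4, boxZ, condT, Finset.mem_filter, Finset.mem_product, Finset.mem_Icc,
      Int.abs_eq_natAbs]
    omega
  rw [hfe]
  have hcast : (((P4 (n/2)).filter (fun x => 2 ∣ x.1 + x.2.1 + x.2.2.1 + x.2.2.2)).card : ℤ)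
      = ∑ x ∈ P4 (n/2), (if 2 ∣ x.1 + x.2.1 + x.2.2.1 + x.2.2.2 then (1:ℤ) else 0) := by
    rw [Finset.card_filter]; push_cast; rfl
  rw [hcast, P4, quad_count (n/2) (by omega)]

lemma master (n : ℤ) (hn : 1 ≤ n) :
    ((Tfin n).card : ℤ) =
      (n/2)*(2*(n/2)+1)^3 + (n/2)*(2*(n/2)+1)^2 + (n/2)*(2*(n/2)+1) + (n/2) + 1
      + 4*(2*(n - n/2)^4 - (n - n/2)^2 - (n - n/2))
      + (if 2 ∣ n then 8*(n - n/2) else 0) := by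
  have hu : Tfin n =
      ((((P4 n).filter (fun x => condT n x ∧
          (|x.1| ≤ n/2 ∧ |x.2.1| ≤ n/2 ∧ |x.2.2.1| ≤ n/2 ∧ |x.2.2.2| ≤ n/2))
        ∪ (P4 n).filter (fun x => condT n x ∧ n/2+1 ≤ |x.1|))
        ∪ (P4 n).filter (fun x => condT n x ∧ n/2+1 ≤ |x.2.1|))
        ∪ (P4 n).filter (fun x => condT n x ∧ n/2+1 ≤ |x.2.2.1|))
        ∪ (P4 n).filter (fun x => condT n x ∧ n/2+1 ≤ |x.2.2.2|) := by
    rw [Tfin, ← Finset.filter_or, ← Finset.filter_or, ← Finset.filter_or, ← Finset.filter_or]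
    apply Finset.filter_congr
    intro x _
    simp only [condT, Int.abs_eq_natAbs, eq_iff_iff]
    omega
  have d1 : Disjoint
      ((P4 n).filter (fun x => condT n x ∧
          (|x.1| ≤ n/2 ∧ |x.2.1| ≤ n/2 ∧ |x.2.2.1| ≤ n/2 ∧ |x.2.2.2| ≤ n/2)))
      ((P4 n).filter (fun x => condT n x ∧ n/2+1 ≤ |x.1|)) := by
    simp only [Finset.disjoint_left, Finset.mem_filter, condT, Int.abs_eq_natAbs]
    omega
  have d2 : Disjoint
      ((P4 n).filter (fun x => condT n x ∧
          (|x.1| ≤ n/2 ∧ |x.2.1| ≤ n/2 ∧ |x.2.2.1| ≤ n/2 ∧ |x.2.2.2| ≤ n/2))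
        ∪ (P4 n).filter (fun x => condT n x ∧ n/2+1 ≤ |x.1|))
      ((P4 n).filter (fun x => condT n x ∧ n/2+1 ≤ |x.2.1|)) := by
    simp only [Finset.disjoint_left, Finset.mem_union, Finset.mem_filter, condT,
      Int.abs_eq_natAbs]
    omega
  have d3 : Disjoint
      (((P4 n).filter (fun x => condT n x ∧
          (|x.1| ≤ n/2 ∧ |x.2.1| ≤ n/2 ∧ |x.2.2.1| ≤ n/2 ∧ |x.2.2.2| ≤ n/2))
        ∪ (P4 n).filter (fun x => condT n x ∧ n/2+1 ≤ |x.1|))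
        ∪ (P4 n).filter (fun x => condT n x ∧ n/2+1 ≤ |x.2.1|))
      ((P4 n).filter (fun x => condT n x ∧ n/2+1 ≤ |x.2.2.1|)) := by
    simp only [Finset.disjoint_left, Finset.mem_union, Finset.mem_filter, condT,
      Int.abs_eq_natAbs]
    omega
  have d4 : Disjoint
      ((((P4 n).filter (fun x => condT n x ∧
          (|x.1| ≤ n/2 ∧ |x.2.1| ≤ n/2 ∧ |x.2.2.1| ≤ n/2 ∧ |x.2.2.2| ≤ n/2))
        ∪ (P4 n).filter (fun x => condT n x ∧ n/2+1 ≤ |x.1|))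
        ∪ (P4 n).filter (fun x => condT n x ∧ n/2+1 ≤ |x.2.1|))
        ∪ (P4 n).filter (fun x => condT n x ∧ n/2+1 ≤ |x.2.2.1|))
      ((P4 n).filter (fun x => condT n x ∧ n/2+1 ≤ |x.2.2.2|)) := by
    simp only [Finset.disjoint_left, Finset.mem_union, Finset.mem_filter, condT,
      Int.abs_eq_natAbs]
    omega
  rw [hu, Finset.card_union_of_disjoint d4, Finset.card_union_of_disjoint d3,
    Finset.card_union_of_disjoint d2, Finset.card_union_of_disjoint d1,
    cardL2, cardL3, cardL4]
  push_cast
  rw [cardS n hn, cardL n hn]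
  by_cases hp : 2 ∣ n
  · simp only [if_pos hp]; ring
  · simp only [if_neg hp]; ring

lemma count_odd (h : ℤ) (hh : 0 ≤ h) :
    ((Tfin (2*h+1)).card : ℤ)
      = (2*h+1)^4 + 2*(2*h+1)^3 + 2*(2*h+1)^2 - 2*(2*h+1) - 2 := by
  rw [master (2*h+1) (by omega)]
  have h1 : (2*h+1)/2 = h := by omega
  rw [h1, if_neg (by omega)]
  ring

lemma count_even_lt (h : ℤ) (hh : 1 ≤ h) :
    ((Tfin (2*h)).card : ℤ) < (2*h+1)^4 := by
  rw [master (2*h) (by omega)]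
  have h1 : (2*h)/2 = h := by omega
  rw [h1, if_pos (by omega : (2:ℤ) ∣ 2*h)]
  nlinarith [sq_nonneg h, hh]

-- helper lemmas
lemma innerProd_stdBasis (u : Fin 4 → ℝ) (i : Fin 4) : innerProd u (stdBasis 4 i) = u i := by
  simp only [innerProd, stdBasis, mul_ite, mul_one, mul_zero]
  rw [Finset.sum_ite_eq' Finset.univ i u]
  simp

lemma innerProd_add (u v w : Fin 4 → ℝ) :
    innerProd u (v + w) = innerProd u v + innerProd u w := by
  simp [innerProd, mul_add, Finset.sum_add_distrib]

lemma innerProd_neg (u v : Fin 4 → ℝ) : innerProd u (-v) = -innerProd u v := by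
  simp [innerProd, Finset.sum_neg_distrib]

lemma innerProd_smul (u v : Fin 4 → ℝ) (r : ℝ) :
    innerProd u (r • v) = r * innerProd u v := by
  rw [innerProd, innerProd, Finset.mul_sum]
  apply Finset.sum_congr rfl
  intro i _
  simp only [Pi.smul_apply, smul_eq_mul]
  ring

lemma pair_le (u : Fin 4 → ℝ) (n : ℝ) (hroots : ∀ v ∈ typeF, |innerProd u v| ≤ n)
    (i j : Fin 4) (hij : i < j) : |u i| + |u j| ≤ n := by
  set ε : ℝ := if 0 ≤ u i then 1 else -1 with hε
  set δ : ℝ := if 0 ≤ u j then 1 else -1 with hδ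
  have hv : (ε • stdBasis 4 i + δ • stdBasis 4 j) ∈ typeF := by
    left; right
    exact ⟨i, j, hij, ε, δ,
      (by by_cases h : 0 ≤ u i <;> simp [hε, h]),
      (by by_cases h : 0 ≤ u j <;> simp [hδ, h]), rfl⟩
  have hcalc : innerProd u (ε • stdBasis 4 i + δ • stdBasis 4 j) = ε * u i + δ * u j := by
    rw [innerProd_add, innerProd_smul, innerProd_smul, innerProd_stdBasis, innerProd_stdBasis]
  have hb := hroots _ hv
  rw [hcalc] at hb
  have h1 : ε * u i = |u i| := by
    by_cases h : 0 ≤ u i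
    · simp [hε, h, abs_of_nonneg h]
    · push_neg at h
      simp [hε, not_le.mpr h, abs_of_neg h]
  have h2 : δ * u j = |u j| := by
    by_cases h : 0 ≤ u j
    · simp [hδ, h, abs_of_nonneg h]
    · push_neg at h
      simp [hδ, not_le.mpr h, abs_of_neg h]
  calc |u i| + |u j| = ε * u i + δ * u j := by rw [h1, h2]
    _ ≤ |ε * u i + δ * u j| := le_abs_self _
    _ ≤ n := hb

lemma roots_bound (u : Fin 4 → ℝ) (n : ℝ)
    (h01 : |u 0| + |u 1| ≤ n) (h02 : |u 0| + |u 2| ≤ n) (h03 : |u 0| + |u 3| ≤ n)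
    (h12 : |u 1| + |u 2| ≤ n) (h13 : |u 1| + |u 3| ≤ n) (h23 : |u 2| + |u 3| ≤ n) :
    ∀ v ∈ typeF, |innerProd u v| ≤ n := by
  have a0 := abs_nonneg (u 0); have a1 := abs_nonneg (u 1)
  have a2 := abs_nonneg (u 2); have a3 := abs_nonneg (u 3)
  have hs0 : |u 0| ≤ n := by linarith
  have hs1 : |u 1| ≤ n := by linarith
  have hs2 : |u 2| ≤ n := by linarith
  have hs3 : |u 3| ≤ n := by linarith
  have h10 : |u 1| + |u 0| ≤ n := by linarith
  have h20 : |u 2| + |u 0| ≤ n := by linarith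
  have h30 : |u 3| + |u 0| ≤ n := by linarith
  have h21 : |u 2| + |u 1| ≤ n := by linarith
  have h31 : |u 3| + |u 1| ≤ n := by linarith
  have h32 : |u 3| + |u 2| ≤ n := by linarith
  have hsingle : ∀ i : Fin 4, |u i| ≤ n := by
    intro i
    fin_cases i
    · exact hs0
    · exact hs1
    · exact hs2
    · exact hs3
  have hpair : ∀ i j : Fin 4, i ≠ j → |u i| + |u j| ≤ n := by
    intro i j hij
    fin_cases i <;> fin_cases j <;>
      first
        | exact absurd rfl hij
        | exact h01 | exact h02 | exact h03 | exact h12 | exact h13 | exact h23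
        | exact h10 | exact h20 | exact h30 | exact h21 | exact h31 | exact h32
  intro v hv
  rcases hv with (hv | hv) | hv
  · obtain ⟨i, rfl | rfl⟩ := hv
    · rw [innerProd_stdBasis]; exact hsingle i
    · rw [innerProd_neg, abs_neg, innerProd_stdBasis]; exact hsingle i
  · obtain ⟨i, j, hij, ε, δ, hε, hδ, rfl⟩ := hv
    rw [innerProd_add, innerProd_smul, innerProd_smul, innerProd_stdBasis, innerProd_stdBasis]
    have h1 : |ε * u i| = |u i| := by rcases hε with rfl | rfl <;> simp
    have h2 : |δ * u j| = |u j| := by rcases hδ with rfl | rfl <;> simp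
    calc |ε * u i + δ * u j| ≤ |ε * u i| + |δ * u j| := abs_add_le _ _
      _ = |u i| + |u j| := by rw [h1, h2]
      _ ≤ n := hpair i j (ne_of_lt hij)
  · have hval : innerProd u v = u 0 * v 0 + u 1 * v 1 + u 2 * v 2 + u 3 * v 3 := by
      simp [innerProd, Fin.sum_univ_four]
    have habs : ∀ i, |v i| = 1/2 := by
      intro i; rcases hv i with h | h <;> rw [h] <;> norm_num
    have hmul : ∀ i : Fin 4, |u i * v i| = |u i| * (1/2) := by
      intro i; rw [abs_mul, habs]
    have t1 : |u 0 * v 0 + u 1 * v 1 + u 2 * v 2 + u 3 * v 3|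
        ≤ |u 0 * v 0| + |u 1 * v 1| + |u 2 * v 2| + |u 3 * v 3| := by
      calc |u 0 * v 0 + u 1 * v 1 + u 2 * v 2 + u 3 * v 3|
          ≤ |u 0 * v 0 + u 1 * v 1 + u 2 * v 2| + |u 3 * v 3| := abs_add_le _ _
        _ ≤ (|u 0 * v 0 + u 1 * v 1| + |u 2 * v 2|) + |u 3 * v 3| := by
            have := abs_add_le (u 0 * v 0 + u 1 * v 1) (u 2 * v 2); linarith
        _ ≤ (|u 0 * v 0| + |u 1 * v 1| + |u 2 * v 2|) + |u 3 * v 3| := by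
            have := abs_add_le (u 0 * v 0) (u 1 * v 1); linarith
    rw [hval]
    have e0 := hmul 0; have e1 := hmul 1; have e2 := hmul 2; have e3 := hmul 3
    linarith

noncomputable def Φ (x : ℤ×ℤ×ℤ×ℤ) : Fin 4 → ℝ :=
  ![(x.1:ℝ), (x.2.1:ℝ), (x.2.2.1:ℝ), (x.2.2.2:ℝ)]

lemma Φ_inj : Function.Injective Φ := by
  rintro ⟨a,b,c,d⟩ ⟨a',b',c',d'⟩ h
  have h0 := congrFun h 0
  have h1 := congrFun h 1
  have h2 := congrFun h 2
  have h3 := congrFun h 3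
  simp only [Φ, Matrix.cons_val_zero, Matrix.cons_val_one, Matrix.head_cons,
    Matrix.cons_val_two, Matrix.tail_cons, Matrix.cons_val_three, Int.cast_inj] at h0 h1 h2 h3
  simp [Prod.ext_iff, h0, h1, h2, h3]

lemma main_set_eq (n : ℕ) :
    {u : Fin 4 → ℝ | u ∈ evenLattice ∧ ∀ v ∈ typeF, |innerProd u v| ≤ (n:ℝ)}
      = Φ '' ↑(Tfin (n:ℤ)) := by
  ext u
  simp only [Set.mem_setOf_eq, Set.mem_image, Finset.mem_coe]
  constructor
  · rintro ⟨⟨hint, m, hsum⟩, hroots⟩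
    obtain ⟨a0, ha0⟩ := hint 0
    obtain ⟨a1, ha1⟩ := hint 1
    obtain ⟨a2, ha2⟩ := hint 2
    obtain ⟨a3, ha3⟩ := hint 3
    have hu : u = Φ (a0, a1, a2, a3) := by
      funext i
      fin_cases i
      · exact ha0
      · exact ha1
      · exact ha2
      · exact ha3
    have p01 := pair_le u n hroots 0 1 (by decide)
    have p02 := pair_le u n hroots 0 2 (by decide)
    have p03 := pair_le u n hroots 0 3 (by decide)
    have p12 := pair_le u n hroots 1 2 (by decide)
    have p13 := pair_le u n hroots 1 3 (by decide)
    have p23 := pair_le u n hroots 2 3 (by decide)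
    rw [ha0, ha1] at p01
    rw [ha0, ha2] at p02
    rw [ha0, ha3] at p03
    rw [ha1, ha2] at p12
    rw [ha1, ha3] at p13
    rw [ha2, ha3] at p23
    have q01 : |a0| + |a1| ≤ (n:ℤ) := by exact_mod_cast (by push_cast; exact p01 : ((|a0| + |a1| : ℤ):ℝ) ≤ (n:ℤ))
    have q02 : |a0| + |a2| ≤ (n:ℤ) := by exact_mod_cast (by push_cast; exact p02 : ((|a0| + |a2| : ℤ):ℝ) ≤ (n:ℤ))
    have q03 : |a0| + |a3| ≤ (n:ℤ) := by exact_mod_cast (by push_cast; exact p03 : ((|a0| + |a3| : ℤ):ℝ) ≤ (n:ℤ))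
    have q12 : |a1| + |a2| ≤ (n:ℤ) := by exact_mod_cast (by push_cast; exact p12 : ((|a1| + |a2| : ℤ):ℝ) ≤ (n:ℤ))
    have q13 : |a1| + |a3| ≤ (n:ℤ) := by exact_mod_cast (by push_cast; exact p13 : ((|a1| + |a3| : ℤ):ℝ) ≤ (n:ℤ))
    have q23 : |a2| + |a3| ≤ (n:ℤ) := by exact_mod_cast (by push_cast; exact p23 : ((|a2| + |a3| : ℤ):ℝ) ≤ (n:ℤ))
    have hdvd : (2:ℤ) ∣ (a0 + a1 + a2 + a3) := by
      refine ⟨m, ?_⟩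
      rw [Fin.sum_univ_four, ha0, ha1, ha2, ha3] at hsum
      exact_mod_cast hsum
    refine ⟨(a0, a1, a2, a3), ?_, hu.symm⟩
    rw [Tfin, Finset.mem_filter]
    constructor
    · simp only [P4, boxZ, Finset.mem_product, Finset.mem_Icc]
      refine ⟨?_, ?_, ?_, ?_⟩ <;> constructor <;> simp only [Int.abs_eq_natAbs] at q01 q23 <;> omega
    · exact ⟨hdvd, q01, q02, q03, q12, q13, q23⟩
  · rintro ⟨⟨a, b, c, d⟩, hx, rfl⟩
    rw [Tfin, Finset.mem_filter] at hx
    have hc := hx.2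
    unfold condT at hc
    obtain ⟨hdvd, q01, q02, q03, q12, q13, q23⟩ := hc
    constructor
    · constructor
      · intro i
        fin_cases i
        · exact ⟨a, rfl⟩
        · exact ⟨b, rfl⟩
        · exact ⟨c, rfl⟩
        · exact ⟨d, rfl⟩
      · obtain ⟨m, hm⟩ := hdvd
        refine ⟨m, ?_⟩
        rw [Fin.sum_univ_four]
        show ((a:ℝ) + b + c + d) = 2 * (m:ℝ)
        exact_mod_cast congrArg (Int.cast : ℤ → ℝ) hm
    · apply roots_bound
      · show |(a:ℝ)| + |(b:ℝ)| ≤ (n:ℝ)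
        exact_mod_cast q01
      · show |(a:ℝ)| + |(c:ℝ)| ≤ (n:ℝ)
        exact_mod_cast q02
      · show |(a:ℝ)| + |(d:ℝ)| ≤ (n:ℝ)
        exact_mod_cast q03
      · show |(b:ℝ)| + |(c:ℝ)| ≤ (n:ℝ)
        exact_mod_cast q12
      · show |(b:ℝ)| + |(d:ℝ)| ≤ (n:ℝ)
        exact_mod_cast q13
      · show |(c:ℝ)| + |(d:ℝ)| ≤ (n:ℝ)
        exact_mod_cast q23

lemma ncard_eq (n : ℕ) :
    {u : Fin 4 → ℝ | u ∈ evenLattice ∧ ∀ v ∈ typeF, |innerProd u v| ≤ (n:ℝ)}.ncard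
      = (Tfin (n:ℤ)).card := by
  rw [main_set_eq, Set.ncard_image_of_injective _ Φ_inj, Set.ncard_coe_finset]

/-- Ehrhart count in type `F_4`, odd case: for every odd `q ≥ 1`, the number of points
`u` of the dual lattice `M` of the `F_4` root lattice with `|⟨u,v⟩| ≤ q` for all roots `v`
is `q⁴ + 2q³ + 2q² − 2q − 2`.  In particular, for every `q ≥ 2` the number of points of
`M` in the interior of the dilate `q·F` (equivalently, with `|⟨u,v⟩| ≤ q − 1` for all
roots `v`) is strictly less than `q⁴`. -/
theorem typeF_ehrhart_odd :
    (∀ q : ℕ, Odd q →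
      ({u | u ∈ evenLattice ∧ ∀ v ∈ typeF, |innerProd u v| ≤ (q : ℝ)}.ncard : ℤ)
        = (q : ℤ) ^ 4 + 2 * (q : ℤ) ^ 3 + 2 * (q : ℤ) ^ 2 - 2 * (q : ℤ) - 2) ∧
    ∀ q : ℕ, 2 ≤ q →
      {u | u ∈ evenLattice ∧ ∀ v ∈ typeF, |innerProd u v| ≤ (q : ℝ) - 1}.ncard < q ^ 4 := by
  constructor
  · intro q hq
    obtain ⟨k, hk⟩ := hq
    rw [ncard_eq q]
    have hcast : ((q:ℕ):ℤ) = 2*(k:ℤ)+1 := by exact_mod_cast hk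
    rw [hcast]
    exact count_odd (k:ℤ) (by positivity)
  · intro q hq
    have hrw : ∀ u : Fin 4 → ℝ, (∀ v ∈ typeF, |innerProd u v| ≤ (q : ℝ) - 1) ↔
        (∀ v ∈ typeF, |innerProd u v| ≤ (((q - 1 : ℕ)) : ℝ)) := by
      intro u
      have : (((q - 1 : ℕ)) : ℝ) = (q : ℝ) - 1 := by
        rw [Nat.cast_sub (by omega)]; norm_num
      rw [this]
    have hset : {u : Fin 4 → ℝ | u ∈ evenLattice ∧ ∀ v ∈ typeF, |innerProd u v| ≤ (q : ℝ) - 1}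
        = {u : Fin 4 → ℝ | u ∈ evenLattice ∧
            ∀ v ∈ typeF, |innerProd u v| ≤ (((q - 1 : ℕ)) : ℝ)} := by
      ext u
      simp only [Set.mem_setOf_eq, hrw u]
    rw [hset, ncard_eq (q-1)]
    have key : ((Tfin ((q - 1 : ℕ) : ℤ)).card : ℤ) < (q:ℤ)^4 := by
      rcases Nat.even_or_odd q with he | ho
      · obtain ⟨m, hm⟩ := he
        have hm1 : 1 ≤ m := by omega
        have hmz : ((q:ℕ):ℤ) = (m:ℤ) + (m:ℤ) := by exact_mod_cast hm
        have hm1z : (1:ℤ) ≤ (m:ℤ) := by exact_mod_cast hm1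
        have hc : ((q - 1 : ℕ) : ℤ) = 2*((m:ℤ)-1)+1 := by omega
        rw [hc, count_odd ((m:ℤ)-1) (by omega)]
        have hq2 : (q:ℤ) = 2*(m:ℤ) := by omega
        rw [hq2]
        have hm1' : (1:ℤ) ≤ (m:ℤ) := by exact_mod_cast hm1
        nlinarith [hm1', sq_nonneg ((m:ℤ))]
      · obtain ⟨m, hm⟩ := ho
        have hm1 : 1 ≤ m := by omega
        have hc : ((q - 1 : ℕ) : ℤ) = 2*(m:ℤ) := by
          have : ((q:ℕ):ℤ) = 2*(m:ℤ)+1 := by exact_mod_cast hm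
          omega
        have hq2 : (q:ℤ) = 2*(m:ℤ)+1 := by exact_mod_cast hm
        rw [hc, hq2]
        exact count_even_lt (m:ℤ) (by exact_mod_cast hm1)
    exact_mod_cast key
end

section
/- Let P ⊆ ℝ^3 be the convex hull of the four lattice points 0, (1,0,0), (0,0,1), and (1,2,1). Then the lattice point (1,1,1) lies in the dilate 2·P, but there do not exist lattice points a, b ∈ P ∩ ℤ^3 with a + b = (1,1,1). In particular, P is not a normal lattice polytope, even though P is the Cayley sum (with respect to the projection onto the third coordinate) of the two normal lattice segments [(0,0), (1,0)] and [(0,0), (1,2)] in ℝ^2. -/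
open Finset Pointwise

/-- A lattice polytope `P ⊆ ℝ^n` is normal if for every positive integer `m`, every
point of `ℤ^n` lying in the dilate `m·P` is a sum of `m` points of `ℤ^n ∩ P`. -/
def IsNormalPolytope (n : ℕ) (P : Set (Fin n → ℝ)) : Prop :=
  ∀ m : ℕ, 0 < m → ∀ x : Fin n → ℝ, (∀ i, ∃ k : ℤ, x i = k) → x ∈ (m : ℝ) • P →
    ∃ f : Fin m → (Fin n → ℝ), (∀ j, f j ∈ P ∧ ∀ i, ∃ k : ℤ, f j i = k) ∧ x = ∑ j, f j

/-- The linear functional `p ↦ ⟨w, p⟩` on `ℝ³`. -/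
def lf3 (w : Fin 3 → ℝ) : (Fin 3 → ℝ) → ℝ := fun p => w 0 * p 0 + w 1 * p 1 + w 2 * p 2

lemma lf3_linear (w : Fin 3 → ℝ) : IsLinearMap ℝ (lf3 w) := by
  constructor
  · intro x y; simp only [lf3, Pi.add_apply]; ring
  · intro c x; simp only [lf3, Pi.smul_apply, smul_eq_mul]; ring

lemma hull_le {s : Set (Fin 3 → ℝ)} (w : Fin 3 → ℝ) (c : ℝ)
    (h : ∀ p ∈ s, lf3 w p ≤ c) {p : Fin 3 → ℝ} (hp : p ∈ convexHull ℝ s) : lf3 w p ≤ c :=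
  convexHull_min h (convex_halfSpace_le (lf3_linear w) c) hp

/-- Normality of a lattice segment from the origin whose direction has first coordinate 1. -/
lemma seg_normal (b : Fin 2 → ℝ) (hbint : ∀ i, ∃ k : ℤ, b i = k) (hb0 : b 0 = 1) :
    IsNormalPolytope 2 (convexHull ℝ {![0,0], b}) := by
  intro m hm x hxint hx
  rw [Set.mem_smul_set] at hx
  obtain ⟨y, hy, hxy⟩ := hx
  have h0 : (![0,0] : Fin 2 → ℝ) = 0 := by funext i; fin_cases i <;> rfl
  rw [h0, convexHull_pair] at hy
  obtain ⟨u, v, hu, hv, huv, hy⟩ := hy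
  have hyv : y = v • b := by rw [← hy]; simp
  obtain ⟨k, hk⟩ := hxint 0
  have hxk : x = (k : ℝ) • b := by
    have hx0 : x 0 = m * v := by
      rw [← hxy, hyv]; simp [hb0]
    have hk' : (k : ℝ) = m * v := by rw [← hk, hx0]
    rw [← hxy, hyv, smul_smul, ← hk']
  have hk0 : 0 ≤ k := by
    have : (0 : ℝ) ≤ (k : ℝ) := by
      have hx0 : x 0 = m * v := by rw [← hxy, hyv]; simp [hb0]
      rw [← hk, hx0] at *
      positivity
    exact_mod_cast this
  have hkm : k ≤ (m : ℤ) := by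
    have hv1 : v ≤ 1 := by linarith
    have : (k : ℝ) ≤ m := by
      have hx0 : x 0 = m * v := by rw [← hxy, hyv]; simp [hb0]
      rw [← hk, hx0]
      calc (m : ℝ) * v ≤ m * 1 := by
            apply mul_le_mul_of_nonneg_left hv1 (by positivity)
        _ = m := mul_one _
    exact_mod_cast this
  set n := k.toNat with hn
  have hnk : (n : ℤ) = k := Int.toNat_of_nonneg hk0
  have hnm : n ≤ m := by omega
  refine ⟨fun j => if (j : ℕ) < n then b else 0, ?_, ?_⟩
  · intro j
    by_cases hj : (j : ℕ) < n
    · simp only [hj, if_true]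
      refine ⟨subset_convexHull ℝ _ ?_, hbint⟩
      rw [h0]; exact Set.mem_insert_of_mem _ rfl
    · simp only [hj, if_false]
      refine ⟨subset_convexHull ℝ _ ?_, fun i => ⟨0, by simp⟩⟩
      rw [h0]; exact Set.mem_insert _ _
  · have hsum : ∑ j : Fin m, (if (j : ℕ) < n then b else 0) = n • b := by
      rw [Fin.sum_univ_eq_sum_range (fun i => if i < n then b else 0) m, ← Finset.sum_filter]
      have hfil : Finset.filter (fun i => i < n) (Finset.range m) = Finset.range n := by
        ext i
        simp only [Finset.mem_filter, Finset.mem_range]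
        omega
      rw [hfil, Finset.sum_const, Finset.card_range]
    rw [hsum, hxk, ← hnk]
    push_cast
    rw [Nat.cast_smul_eq_nsmul ℝ]

/-- No lattice point of `P` has second coordinate `1`. -/
lemma no_middle_lattice {a : Fin 3 → ℝ}
    (ha : a ∈ convexHull ℝ {![0,0,0], ![1,0,0], ![0,0,1], ![(1:ℝ),2,1]})
    (haint : ∀ i, ∃ k : ℤ, a i = k) : a 1 ≠ 1 := by
  intro ha1
  have hverts : ∀ w : Fin 3 → ℝ, ∀ c : ℝ,
      lf3 w ![0,0,0] ≤ c → lf3 w ![1,0,0] ≤ c → lf3 w ![0,0,1] ≤ c → lf3 w ![1,2,1] ≤ c →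
      lf3 w a ≤ c := by
    intro w c h1 h2 h3 h4
    refine hull_le w c ?_ ha
    rintro p hp
    simp only [Set.mem_insert_iff, Set.mem_singleton_iff] at hp
    rcases hp with rfl | rfl | rfl | rfl <;> assumption
  have hI1 : a 1 - 2 * a 0 ≤ 0 := by
    have := hverts ![-2, 1, 0] 0 (by norm_num [lf3, Matrix.cons_val_two]) (by norm_num [lf3, Matrix.cons_val_two])
      (by norm_num [lf3, Matrix.cons_val_two]) (by norm_num [lf3, Matrix.cons_val_two])
    simp only [lf3] at this
    norm_num [Matrix.cons_val_two] at this ⊢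
    linarith
  have hI2 : a 1 - 2 * a 2 ≤ 0 := by
    have := hverts ![0, 1, -2] 0 (by norm_num [lf3, Matrix.cons_val_two]) (by norm_num [lf3, Matrix.cons_val_two])
      (by norm_num [lf3, Matrix.cons_val_two]) (by norm_num [lf3, Matrix.cons_val_two])
    simp only [lf3] at this
    norm_num [Matrix.cons_val_two] at this ⊢
    linarith
  have hI3 : 2 * a 0 + 2 * a 2 - a 1 ≤ 2 := by
    have := hverts ![2, -1, 2] 2 (by norm_num [lf3, Matrix.cons_val_two]) (by norm_num [lf3, Matrix.cons_val_two])
      (by norm_num [lf3, Matrix.cons_val_two]) (by norm_num [lf3, Matrix.cons_val_two])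
    simp only [lf3] at this
    norm_num [Matrix.cons_val_two] at this ⊢
    linarith
  obtain ⟨k0, hk0⟩ := haint 0
  obtain ⟨k2, hk2⟩ := haint 2
  simp only [ha1, hk0, hk2] at hI1 hI2 hI3
  have e1 : (1 : ℤ) ≤ 2 * k0 := by exact_mod_cast (by linarith : (1:ℝ) ≤ 2 * (k0:ℝ))
  have e2 : (1 : ℤ) ≤ 2 * k2 := by exact_mod_cast (by linarith : (1:ℝ) ≤ 2 * (k2:ℝ))
  have e3 : 2 * k0 + 2 * k2 ≤ 3 := by
    exact_mod_cast (by linarith : 2 * (k0:ℝ) + 2 * (k2:ℝ) ≤ 3)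
  omega

/-- The linear embedding `ℝ² → ℝ³`, `p ↦ (p 0, p 1, 0)`. -/
def Lmap : (Fin 2 → ℝ) →ₗ[ℝ] (Fin 3 → ℝ) where
  toFun p := ![p 0, p 1, 0]
  map_add' x y := by funext i; fin_cases i <;> simp
  map_smul' c x := by funext i; fin_cases i <;> simp

/-- The affine embedding `ℝ² → ℝ³`, `p ↦ (p 0, p 1, 1)`. -/
noncomputable def Amap1 : (Fin 2 → ℝ) →ᵃ[ℝ] (Fin 3 → ℝ) :=
  AffineMap.mk' (fun p => ![p 0, p 1, 1]) Lmap 0 (by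
    intro p'
    funext i
    fin_cases i <;> simp [Lmap])

/-- Let `P ⊆ ℝ³` be the convex hull of `0`, `(1,0,0)`, `(0,0,1)`, `(1,2,1)`.  Then
`(1,1,1)` lies in `2·P` but is not a sum of two lattice points of `P`; in particular `P`
is not normal, even though `P` is the Cayley sum (with respect to the projection to the
third coordinate) of the two segments `[(0,0),(1,0)]` and `[(0,0),(1,2)]` in `ℝ²`, both
of which are normal. -/
theorem cayley_sum_of_normal_not_normal (P : Set (Fin 3 → ℝ))
    (hP : P = convexHull ℝ {![0,0,0], ![1,0,0], ![0,0,1], ![1,2,1]})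
    (Q₁ Q₂ : Set (Fin 2 → ℝ))
    (hQ₁ : Q₁ = convexHull ℝ {![0,0], ![1,0]})
    (hQ₂ : Q₂ = convexHull ℝ {![0,0], ![1,2]}) :
    ![1,1,1] ∈ (2 : ℝ) • P ∧
    (¬ ∃ a b : Fin 3 → ℝ, a ∈ P ∧ b ∈ P ∧ (∀ i, ∃ k : ℤ, a i = k) ∧
      (∀ i, ∃ k : ℤ, b i = k) ∧ a + b = ![1,1,1]) ∧
    ¬ IsNormalPolytope 3 P ∧
    P = convexHull ℝ
      ((fun p : Fin 2 → ℝ => ![p 0, p 1, 0]) '' Q₁ ∪ (fun p : Fin 2 → ℝ => ![p 0, p 1, 1]) '' Q₂) ∧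
    IsNormalPolytope 2 Q₁ ∧ IsNormalPolytope 2 Q₂ := by
  have part1 : ![(1:ℝ),1,1] ∈ (2 : ℝ) • P := by
    rw [hP, Set.mem_smul_set]
    have hC := convex_convexHull ℝ ({![0,0,0], ![1,0,0], ![0,0,1], ![(1:ℝ),2,1]} : Set (Fin 3 → ℝ))
    have hv0 : (![0,0,0] : Fin 3 → ℝ) ∈ convexHull ℝ {![0,0,0], ![1,0,0], ![0,0,1], ![(1:ℝ),2,1]} :=
      subset_convexHull ℝ _ (Set.mem_insert _ _)
    have hv1 : (![1,0,0] : Fin 3 → ℝ) ∈ convexHull ℝ {![0,0,0], ![1,0,0], ![0,0,1], ![(1:ℝ),2,1]} :=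
      subset_convexHull ℝ _ (Set.mem_insert_of_mem _ (Set.mem_insert _ _))
    have hv2 : (![0,0,1] : Fin 3 → ℝ) ∈ convexHull ℝ {![0,0,0], ![1,0,0], ![0,0,1], ![(1:ℝ),2,1]} :=
      subset_convexHull ℝ _ (Set.mem_insert_of_mem _ (Set.mem_insert_of_mem _ (Set.mem_insert _ _)))
    have hv3 : (![1,2,1] : Fin 3 → ℝ) ∈ convexHull ℝ {![0,0,0], ![1,0,0], ![0,0,1], ![(1:ℝ),2,1]} :=
      subset_convexHull ℝ _ (Set.mem_insert_of_mem _ (Set.mem_insert_of_mem _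
        (Set.mem_insert_of_mem _ rfl)))
    have hp1 := hC hv0 hv1 (by norm_num : (0:ℝ) ≤ 1/2) (by norm_num : (0:ℝ) ≤ 1/2) (by norm_num)
    have hp2 := hC hv2 hv3 (by norm_num : (0:ℝ) ≤ 1/2) (by norm_num : (0:ℝ) ≤ 1/2) (by norm_num)
    have hq := hC hp1 hp2 (by norm_num : (0:ℝ) ≤ 1/2) (by norm_num : (0:ℝ) ≤ 1/2) (by norm_num)
    refine ⟨_, hq, ?_⟩
    funext i
    fin_cases i <;>
      simp [Pi.add_apply, Pi.smul_apply, smul_eq_mul] <;> norm_num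
  have part2 : ¬ ∃ a b : Fin 3 → ℝ, a ∈ P ∧ b ∈ P ∧ (∀ i, ∃ k : ℤ, a i = k) ∧
      (∀ i, ∃ k : ℤ, b i = k) ∧ a + b = ![1,1,1] := by
    rintro ⟨a, b, ha, hb, haint, hbint, hab⟩
    obtain ⟨ka, hka⟩ := haint 1
    obtain ⟨kb, hkb⟩ := hbint 1
    have hsum1 : a 1 + b 1 = 1 := by
      have := congrFun hab 1
      simpa using this
    have hkab : ka + kb = 1 := by
      exact_mod_cast (by rw [← hka, ← hkb]; exact hsum1 : (ka:ℝ) + (kb:ℝ) = 1)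
    have hka0 : 0 ≤ ka := by
      have h1 : lf3 ![0,-1,0] a ≤ 0 := by
        refine hull_le ![0,-1,0] 0 ?_ (hP ▸ ha)
        rintro p hp
        simp only [Set.mem_insert_iff, Set.mem_singleton_iff] at hp
        rcases hp with rfl | rfl | rfl | rfl <;> norm_num [lf3, Matrix.cons_val_two]
      simp only [lf3] at h1
      norm_num [Matrix.cons_val_two] at h1
      rw [hka] at h1
      exact_mod_cast h1
    have hkb0 : 0 ≤ kb := by
      have h1 : lf3 ![0,-1,0] b ≤ 0 := by
        refine hull_le ![0,-1,0] 0 ?_ (hP ▸ hb)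
        rintro p hp
        simp only [Set.mem_insert_iff, Set.mem_singleton_iff] at hp
        rcases hp with rfl | rfl | rfl | rfl <;> norm_num [lf3, Matrix.cons_val_two]
      simp only [lf3] at h1
      norm_num [Matrix.cons_val_two] at h1
      rw [hkb] at h1
      exact_mod_cast h1
    have : ka = 1 ∨ kb = 1 := by omega
    rcases this with h | h
    · exact no_middle_lattice (hP ▸ ha) haint (by rw [hka, h]; norm_num)
    · exact no_middle_lattice (hP ▸ hb) hbint (by rw [hkb, h]; norm_num)
  have part3 : ¬ IsNormalPolytope 3 P := by
    intro h
    obtain ⟨f, hf, hsum⟩ := h 2 (by norm_num) ![1,1,1]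
      (fun i => by fin_cases i <;> exact ⟨1, by norm_num⟩) (by exact_mod_cast part1)
    exact part2 ⟨f 0, f 1, (hf 0).1, (hf 1).1, (hf 0).2, (hf 1).2,
      by rw [← Fin.sum_univ_two f, ← hsum]⟩
  have part4 : P = convexHull ℝ
      ((fun p : Fin 2 → ℝ => ![p 0, p 1, 0]) '' Q₁ ∪
       (fun p : Fin 2 → ℝ => ![p 0, p 1, 1]) '' Q₂) := by
    rw [hP, hQ₁, hQ₂]
    have e0 : (fun p : Fin 2 → ℝ => ![p 0, p 1, (0:ℝ)]) = ⇑Lmap.toAffineMap := rfl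
    have e1 : (fun p : Fin 2 → ℝ => ![p 0, p 1, (1:ℝ)]) = ⇑Amap1 := rfl
    have c1 : (⇑Lmap.toAffineMap) ![(0:ℝ),0] = ![(0:ℝ),0,0] := by
      funext i; fin_cases i <;> simp [Lmap]
    have c2 : (⇑Lmap.toAffineMap) ![(1:ℝ),0] = ![(1:ℝ),0,0] := by
      funext i; fin_cases i <;> simp [Lmap]
    have c3 : (⇑Amap1) ![(0:ℝ),0] = ![(0:ℝ),0,1] := by
      funext i; fin_cases i <;> simp [Amap1, Lmap, AffineMap.coe_mk']
    have c4 : (⇑Amap1) ![(1:ℝ),2] = ![(1:ℝ),2,1] := by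
      funext i; fin_cases i <;> simp [Amap1, Lmap, AffineMap.coe_mk']
    rw [e0, e1, AffineMap.image_convexHull, AffineMap.image_convexHull,
      Set.image_pair, Set.image_pair, c1, c2, c3, c4,
      convexHull_convexHull_union_left, convexHull_convexHull_union_right]
    congr 1
    ext p
    simp only [Set.mem_insert_iff, Set.mem_singleton_iff, Set.mem_union]
    tauto
  refine ⟨part1, part2, part3, part4, ?_, ?_⟩
  · rw [hQ₁]
    exact seg_normal ![1,0] (fun i => by fin_cases i; exacts [⟨1, by norm_num⟩, ⟨0, by norm_num⟩]) rfl
  · rw [hQ₂]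
    exact seg_normal ![1,2] (fun i => by fin_cases i; exacts [⟨1, by norm_num⟩, ⟨2, by norm_num⟩]) rfl
end
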